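/- Let n ≥ 1 and let a, b, c ∈ ℤ_n, and let P(x,y) = a + b·x + c·y. Then (ℤ_n, P) is a quasigroup satisfying the unipotent law P(x,x) = P(y,y) for all x, y ∈ ℤ_n if and only if b + c = 0 in ℤ_n and both b and c are units of ℤ_n. -/

import Mathlib

lemma aux_unit {n : ℕ} [NeZero n] (b k : ZMod n)
    (h : Function.Bijective (fun x : ZMod n => k + b * x)) : IsUnit b := by
  obtain ⟨x, hx⟩ := h.2 (k + 1)
  simp only at hx
  exact IsUnit.of_mul_eq_one (a := b) x (by linear_combination hx)

lemma aux_bij {n : ℕ} (b k : ZMod n) (hb : IsUnit b) :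
    Function.Bijective (fun x : ZMod n => k + b * x) := by
  obtain ⟨u, rfl⟩ := hb
  exact (Equiv.bijective ((Units.mulLeft u).trans (Equiv.addLeft k)))

/-- For `P(x,y) = a + b*x + c*y` over `ℤ_n` (`n ≥ 1`), `(ℤ_n, P)` is a unipotent
quasigroup iff `b + c = 0` and both `b` and `c` are units. -/
theorem stmt_1 (n : ℕ) (hn : 1 ≤ n) (a b c : ZMod n) :
    ((∀ u : ZMod n, Function.Bijective (fun x : ZMod n => a + b * x + c * u) ∧
        Function.Bijective (fun y : ZMod n => a + b * u + c * y)) ∧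
      (∀ x y : ZMod n, a + b * x + c * x = a + b * y + c * y)) ↔
    (b + c = 0 ∧ IsUnit b ∧ IsUnit c) := by
  haveI : NeZero n := ⟨by omega⟩
  constructor
  · rintro ⟨hq, hu⟩
    refine ⟨by linear_combination hu 1 0, ?_, ?_⟩
    · have h := (hq 0).1
      simp only [mul_zero, add_zero] at h
      exact aux_unit b a h
    · have h := (hq 0).2
      simp only [mul_zero, add_zero] at h
      exact aux_unit c a h
  · rintro ⟨hbc, hb, hc⟩
    refine ⟨fun u => ⟨?_, ?_⟩, fun x y => by linear_combination (x - y) * hbc⟩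
    · have h : (fun x : ZMod n => a + b * x + c * u)
          = fun x : ZMod n => (a + c * u) + b * x := by funext x; ring
      rw [h]; exact aux_bij b (a + c * u) hb
    · have h : (fun y : ZMod n => a + b * u + c * y)
          = fun y : ZMod n => (a + b * u) + c * y := by funext y; ring
      rw [h]; exact aux_bij c (a + b * u) hc
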